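/- Let q be a positive integer and c₀, c₁ ∈ ℤ, and let P(x) = q·x² + c₁·x + c₀. Then for every real number β and every ε > 0 there exist integers n, d₁, d₂ with d₂ ≠ 0 such that P(n) = d₁·d₂ and |n/d₂ + β| < ε. -/

import Mathlib

/-- Let `q` be a positive integer, `c₀ c₁ ∈ ℤ` and
`P(x) = q·x² + c₁·x + c₀`. For every real `β` and every `ε > 0` there exist integers
`n, d₁, d₂` with `d₂ ≠ 0` such that `P(n) = d₁·d₂` and `|n/d₂ + β| < ε`. -/
theorem nonmonic_quadratic_ratio (q : ℕ) (hq : 0 < q) (c₀ c₁ : ℤ)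
    (β : ℝ) (ε : ℝ) (hε : 0 < ε) :
    ∃ n d₁ d₂ : ℤ, d₂ ≠ 0 ∧ (q : ℤ) * n ^ 2 + c₁ * n + c₀ = d₁ * d₂ ∧
      |(n : ℝ) / (d₂ : ℝ) + β| < ε := by
  obtain ⟨γ, hγ⟩ : ∃ g : ℝ, g = -β := ⟨_, rfl⟩
  obtain ⟨A1, hA1def⟩ : ∃ a : ℤ, a = (c₁.natAbs : ℤ) := ⟨_, rfl⟩
  obtain ⟨A0, hA0def⟩ : ∃ a : ℤ, a = (c₀.natAbs : ℤ) := ⟨_, rfl⟩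
  obtain ⟨J, hJdef⟩ : ∃ j : ℤ, j = A1 + A0 + 2 := ⟨_, rfl⟩
  obtain ⟨s, hsN, hsp⟩ := Nat.exists_infinite_primes
      (max (max (q + 1) (c₁.natAbs + c₀.natAbs + 4)) (⌈4 / ε⌉₊ + 1))
  haveI : Fact s.Prime := ⟨hsp⟩
  haveI : NeZero s := ⟨hsp.ne_zero⟩
  obtain ⟨S, hSdef⟩ : ∃ t : ℤ, t = (s : ℤ) := ⟨_, rfl⟩
  -- basic size facts about s
  have hq_lt : q + 1 ≤ s := le_trans (le_trans (le_max_left _ _) (le_max_left _ _)) hsN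
  have hJ_le : c₁.natAbs + c₀.natAbs + 4 ≤ s :=
    le_trans (le_trans (le_max_right _ _) (le_max_left _ _)) hsN
  have hε_le : ⌈4 / ε⌉₊ + 1 ≤ s := le_trans (le_max_right _ _) hsN
  have hS2 : (2 : ℤ) ≤ S := by rw [hSdef]; exact_mod_cast hsp.two_le
  have hSpos : (0 : ℤ) < S := by omega
  have hJS : J + 2 ≤ S := by
    have h1 : ((c₁.natAbs + c₀.natAbs + 4 : ℕ) : ℤ) ≤ S := by rw [hSdef]; exact_mod_cast hJ_le
    push_cast at h1
    omega
  have hA1n : (0:ℤ) ≤ A1 := by rw [hA1def]; exact Int.natCast_nonneg _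
  have hA0n : (0:ℤ) ≤ A0 := by rw [hA0def]; exact Int.natCast_nonneg _
  have hJ0 : (2 : ℤ) ≤ J := by omega
  have hSr : (0 : ℝ) < (s : ℝ) := by exact_mod_cast hsp.pos
  have hεS : 4 / ε < (s : ℝ) := by
    have h1 : (4:ℝ) / ε ≤ (⌈4 / ε⌉₊ : ℝ) := Nat.le_ceil _
    have h2 : ((⌈4 / ε⌉₊ : ℕ) : ℝ) + 1 ≤ (s : ℝ) := by exact_mod_cast hε_le
    linarith
  have hc1a : c₁ ≤ A1 := by rw [hA1def]; exact Int.le_natAbs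
  have hc1b : -A1 ≤ c₁ := by rw [hA1def, ← Int.abs_eq_natAbs]; exact neg_abs_le _
  have hc0a : c₀ ≤ A0 := by rw [hA0def]; exact Int.le_natAbs
  have hc0b : -A0 ≤ c₀ := by rw [hA0def, ← Int.abs_eq_natAbs]; exact neg_abs_le _
  -- the fractional data
  obtain ⟨m, hmdef⟩ : ∃ m : ℤ, m = ⌊γ⌋ := ⟨_, rfl⟩
  obtain ⟨x, hxdef⟩ : ∃ r : ℝ, r = Int.fract γ := ⟨_, rfl⟩
  have hx0 : 0 ≤ x := by rw [hxdef]; exact Int.fract_nonneg γ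
  have hx1 : x < 1 := by rw [hxdef]; exact Int.fract_lt_one γ
  have hγmx : γ = (m : ℝ) + x := by
    rw [hmdef, hxdef]
    exact (Int.floor_add_fract γ).symm
  obtain ⟨h, hhdef⟩ : ∃ a : ℤ, a = max 1 ⌊x * (s : ℝ)⌋ := ⟨_, rfl⟩
  have hh1 : 1 ≤ h := by rw [hhdef]; exact le_max_left _ _
  have hhS : h < S := by
    have hfl : ⌊x * (s:ℝ)⌋ < S := by
      rw [Int.floor_lt, hSdef]
      push_cast
      nlinarith
    rw [hhdef]
    exact max_lt (by omega) hfl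
  have hhx : |(h : ℝ) - x * s| ≤ 1 := by
    rcases le_or_gt 1 ⌊x * (s:ℝ)⌋ with hc | hc
    · have he : h = ⌊x * (s:ℝ)⌋ := by rw [hhdef]; exact max_eq_right hc
      rw [he, abs_le]
      constructor
      · linarith [Int.floor_le (x * (s:ℝ)), Int.lt_floor_add_one (x * (s:ℝ))]
      · linarith [Int.floor_le (x * (s:ℝ)), Int.lt_floor_add_one (x * (s:ℝ))]
    · have hxs1 : x * s < 1 := by
        by_contra hcon
        push_neg at hcon
        have := Int.le_floor.mpr (by exact_mod_cast hcon : ((1:ℤ):ℝ) ≤ x * s)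
        omega
      have he : h = 1 := by rw [hhdef]; exact max_eq_left (by omega)
      rw [he, abs_le]
      have hxs0 : 0 ≤ x * s := mul_nonneg hx0 (le_of_lt hSr)
      constructor
      · push_cast; nlinarith
      · push_cast; nlinarith
  -- modular inverse
  have hqZ : ((q : ℕ) : ZMod s) ≠ 0 := by
    rw [Ne, ZMod.natCast_eq_zero_iff]
    intro hdvd
    have := Nat.le_of_dvd hq hdvd
    omega
  have hhZ : (((h : ℤ)) : ZMod s) ≠ 0 := by
    rw [Ne, ZMod.intCast_zmod_eq_zero_iff_dvd]
    intro hdvd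
    have := Int.le_of_dvd (by omega) hdvd
    omega
  obtain ⟨w₀, hw₀pos, hw₀lt, hw⟩ :
      ∃ w : ℕ, 0 < w ∧ w < s ∧
        ((q : ℕ) : ZMod s) * (((h : ℤ)) : ZMod s) * ((w : ℕ) : ZMod s) = 1 := by
    have hA : ((q : ℕ) : ZMod s) * (((h : ℤ)) : ZMod s) ≠ 0 := mul_ne_zero hqZ hhZ
    have hAinv : (((q : ℕ) : ZMod s) * (((h : ℤ)) : ZMod s))⁻¹ ≠ 0 := inv_ne_zero hA
    refine ⟨((((q : ℕ) : ZMod s) * (((h : ℤ)) : ZMod s))⁻¹).val, ?_, ZMod.val_lt _, ?_⟩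
    · rcases Nat.eq_zero_or_pos ((((q : ℕ) : ZMod s) * (((h : ℤ)) : ZMod s))⁻¹).val with h0 | h0
      · exfalso; apply hAinv; rw [← ZMod.val_eq_zero]; exact h0
      · exact h0
    · rw [ZMod.natCast_rightInverse _]
      exact mul_inv_cancel₀ hA
  -- the main integers
  obtain ⟨W, hWdef⟩ : ∃ w : ℤ, w = (w₀ : ℤ) + J * S := ⟨_, rfl⟩
  obtain ⟨V, hVdef⟩ : ∃ v : ℤ, v = (q : ℤ) * W ^ 2 - c₁ * S * W + c₀ * S ^ 2 := ⟨_, rfl⟩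
  obtain ⟨G, hGdef⟩ : ∃ g : ℤ, g = h + m * S := ⟨_, rfl⟩
  have hWlb : J * S + 1 ≤ W := by
    have h1 : (1 : ℤ) ≤ (w₀ : ℤ) := by exact_mod_cast hw₀pos
    rw [hWdef]
    linarith only [h1]
  have hWub : W ≤ (J + 1) * S := by
    have h1 : (w₀ : ℤ) < S := by rw [hSdef]; exact_mod_cast hw₀lt
    rw [hWdef]
    linarith only [h1]
  have hWpos : 0 < W := by
    have h1 : 0 ≤ J * S := mul_nonneg (by linarith only [hJ0]) (le_of_lt hSpos)
    linarith only [h1, hWlb]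
  have hq1 : (1 : ℤ) ≤ (q : ℤ) := by exact_mod_cast hq
  -- V is large
  have hVlb : S ^ 2 ≤ V := by
    have hWJS : J * S ≤ W := by omega
    have st1 : W ^ 2 ≤ (q:ℤ) * W ^ 2 := by
      have := mul_le_mul_of_nonneg_right hq1 (sq_nonneg W)
      linarith only [this]
    have st2 : c₁ * (S * W) ≤ A1 * (S * W) :=
      mul_le_mul_of_nonneg_right hc1a (mul_nonneg hSpos.le hWpos.le)
    have st3 : -(A0 * S ^ 2) ≤ c₀ * S ^ 2 := by
      have := mul_le_mul_of_nonneg_right hc0b (sq_nonneg S)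
      linarith only [this]
    have hJS' : J * S = A1 * S + A0 * S + 2 * S := by rw [hJdef]; ring
    have hWA1 : (A0 + 2) * S ≤ W - A1 * S := by linarith only [hWJS, hJS']
    have hp : (J * S) * ((A0 + 2) * S) ≤ W * (W - A1 * S) := by
      apply mul_le_mul hWJS hWA1 (mul_nonneg (by linarith only [hA0n]) hSpos.le) hWpos.le
    have hexp : (J * S) * ((A0 + 2) * S)
        = (A1 * (A0 + 2) + A0 * A0 + 3 * A0 + 2 + (A0 + 2)) * S ^ 2 := by
      rw [hJdef]; ring
    have hnn1 : 0 ≤ A1 * (A0 + 2) := mul_nonneg hA1n (by linarith only [hA0n])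
    have hnn2 : 0 ≤ A0 * A0 := mul_nonneg hA0n hA0n
    have hnn4 : (A0 + 1) * S ^ 2 ≤ (J * S) * ((A0 + 2) * S) := by
      rw [hexp]
      have : 0 ≤ (A1 * (A0 + 2) + A0 * A0 + 3 * A0 + 2 + 1) * S ^ 2 :=
        mul_nonneg (by linarith only [hnn1, hnn2, hA0n]) (sq_nonneg S)
      linarith only [this]
    have hfin : V = (q:ℤ) * W ^ 2 - c₁ * (S * W) + c₀ * S ^ 2 := by rw [hVdef]; ring
    have hAexp : (A0 + 1) * S ^ 2 = A0 * S ^ 2 + S ^ 2 := by ring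
    have hWexp : W * (W - A1 * S) = W ^ 2 - A1 * (S * W) := by ring
    linarith only [st1, st2, st3, hp, hnn4, hfin, hAexp, hWexp]
  have hVpos : 0 < V := lt_of_lt_of_le (pow_pos hSpos 2) hVlb
  -- divisibility of G*V - W by s
  have hdvd : S ∣ G * V - W := by
    have hz : ((G * V - W : ℤ) : ZMod s) = 0 := by
      rw [hGdef, hVdef, hWdef, hSdef]
      push_cast [ZMod.natCast_self]
      ring_nf
      linear_combination ((w₀ : ZMod s)) * hw
    rw [hSdef]
    exact_mod_cast (ZMod.intCast_zmod_eq_zero_iff_dvd _ s).mp hz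
  obtain ⟨n, hn⟩ := hdvd
  -- the cofactor identity
  have key : S ^ 2 * ((q:ℤ) * n ^ 2 + c₁ * n + c₀)
      = V * ((q:ℤ) * G ^ 2 * V - 2 * (q:ℤ) * G * W + c₁ * S * G + 1) := by
    rw [hVdef]
    rw [hVdef] at hn
    linear_combination (-((q:ℤ) * (S * n + G * ((q : ℤ) * W ^ 2 - c₁ * S * W + c₀ * S ^ 2) - W)
      + c₁ * S)) * hn
  -- coprimality of V and S
  have hSV : ¬ (S ∣ V) := by
    intro hdvdV
    have h0 : ((V : ℤ) : ZMod s) = 0 := by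
      rw [ZMod.intCast_zmod_eq_zero_iff_dvd]
      rw [hSdef] at hdvdV
      exact_mod_cast hdvdV
    rw [hVdef, hWdef, hSdef] at h0
    push_cast [ZMod.natCast_self] at h0
    have h0' : ((q:ℕ) : ZMod s) * ((w₀:ℕ) : ZMod s) ^ 2 = 0 := by
      linear_combination h0
    have hone : (1 : ZMod s) = 0 := by
      linear_combination (-(((q:ℕ) : ZMod s) * (((h:ℤ)) : ZMod s) * ((w₀:ℕ) : ZMod s) + 1)) * hw
        + (((q:ℕ) : ZMod s) * (((h:ℤ)) : ZMod s) ^ 2) * h0'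
    exact one_ne_zero hone
  have hcop : IsCoprime V S := by
    rw [Int.isCoprime_iff_gcd_eq_one]
    by_contra hg
    have h2 : (Int.gcd V S : ℤ) ∣ S := Int.gcd_dvd_right V S
    have h3 : (Int.gcd V S : ℤ) ∣ V := Int.gcd_dvd_left V S
    have hgs : Int.gcd V S ∣ s := by
      rw [← Int.natCast_dvd_natCast, ← hSdef]
      exact h2
    rcases hsp.eq_one_or_self_of_dvd _ hgs with h1 | h1
    · exact hg h1
    · apply hSV
      rw [h1] at h3
      rw [hSdef]
      exact_mod_cast h3
  have hVP : V ∣ (q:ℤ) * n ^ 2 + c₁ * n + c₀ := by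
    have hc2 : IsCoprime V (S ^ 2) := hcop.pow_right
    have hdd : V ∣ S ^ 2 * ((q:ℤ) * n ^ 2 + c₁ * n + c₀) :=
      ⟨(q:ℤ) * G ^ 2 * V - 2 * (q:ℤ) * G * W + c₁ * S * G + 1, key⟩
    exact hc2.dvd_of_dvd_mul_left hdd
  obtain ⟨d₁, hd₁⟩ := hVP
  refine ⟨n, d₁, V, hVpos.ne', hd₁.trans (mul_comm V d₁), ?_⟩
  -- the real estimate
  have hVr : (0:ℝ) < (V:ℝ) := by exact_mod_cast hVpos
  have hVrlb : ((s:ℝ))^2 ≤ (V:ℝ) := by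
    have h1 := hVlb
    rw [hSdef] at h1
    exact_mod_cast h1
  have hs0 : (s:ℝ) ≠ 0 := ne_of_gt hSr
  have hV0 : (V:ℝ) ≠ 0 := ne_of_gt hVr
  have hcast : (G:ℝ) * (V:ℝ) - (W:ℝ) = (s:ℝ) * (n:ℝ) := by
    have h1 := congrArg (fun z : ℤ => (z : ℝ)) hn
    rw [hSdef] at h1
    push_cast at h1
    linarith only [h1]
  have hGr : (G:ℝ) = (h:ℝ) + (m:ℝ) * (s:ℝ) := by
    rw [hGdef, hSdef]; push_cast; ring
  have hWr0 : (0:ℝ) < (W:ℝ) := by exact_mod_cast hWpos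
  have hWrub : (W:ℝ) ≤ (s:ℝ) * (s:ℝ) := by
    have h2 : J + 1 ≤ S := by linarith only [hJS]
    have h3 : (J + 1) * S ≤ S * S := mul_le_mul_of_nonneg_right h2 hSpos.le
    have h4 : W ≤ S * S := le_trans hWub h3
    rw [hSdef] at h4
    exact_mod_cast h4
  have hβ : β = -((m:ℝ) + x) := by
    rw [← hγmx, hγ]; ring
  have hsplit : (n:ℝ) / (V:ℝ) + β = ((h:ℝ) - x * s) / s - (W:ℝ) / ((s:ℝ) * (V:ℝ)) := by
    rw [hβ]
    have hn' : (n:ℝ) = ((G:ℝ) * V - W) / s := eq_div_of_mul_eq hs0 (by rw [hcast]; ring)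
    rw [hn', hGr]
    field_simp
    ring
  rw [hsplit]
  have hb1 : |((h:ℝ) - x * s) / s| ≤ 1 / s := by
    rw [abs_div, abs_of_pos hSr]
    gcongr
  have hb2 : |(W:ℝ) / ((s:ℝ) * (V:ℝ))| ≤ 1 / s := by
    rw [abs_of_pos (div_pos hWr0 (mul_pos hSr hVr))]
    have e1 : (W:ℝ) / ((s:ℝ) * (V:ℝ)) ≤ ((s:ℝ) * (s:ℝ)) / ((s:ℝ) * (s:ℝ)^2) := by
      apply div_le_div₀ (mul_nonneg hSr.le hSr.le) hWrub
        (mul_pos hSr (pow_pos hSr 2))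
      exact mul_le_mul_of_nonneg_left hVrlb hSr.le
    have e2 : ((s:ℝ) * (s:ℝ)) / ((s:ℝ) * (s:ℝ)^2) = 1 / s := by
      field_simp
    linarith only [e1, e2]
  have htot : |((h:ℝ) - x * s) / s - (W:ℝ) / ((s:ℝ) * (V:ℝ))| ≤ 2 / s :=
    calc |((h:ℝ) - x * s) / s - (W:ℝ) / ((s:ℝ) * (V:ℝ))|
        ≤ |((h:ℝ) - x * s) / s| + |(W:ℝ) / ((s:ℝ) * (V:ℝ))| := abs_sub _ _
      _ ≤ 1 / s + 1 / s := add_le_add hb1 hb2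
      _ = 2 / s := by ring
  have hfin : 2 / (s:ℝ) < ε := by
    rw [div_lt_iff₀ hSr]
    have h4 : 4 < ε * s := by
      have := (div_lt_iff₀ hε).mp hεS
      linarith
    linarith
  linarith only [htot, hfin]
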